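/- Let (a_n)_{n∈ℕ} be a real-valued sequence (not necessarily non-negative) with ∑_{n∈ℕ} a_n² < ∞. Then ∑_{n∈ℕ} a_n² ≤ 8 · ∑_{n∈ℕ} (n+1)² (a_{n+1} − a_n)², where the right-hand series is interpreted as a value in [0,∞]. -/
import Mathlib

open Finset

lemma aux_sub (a : ℕ → ℝ) (hsum : Summable fun n => a n ^ 2) {ε : ℝ} (hε : 0 < ε) (M : ℕ) :
    ∃ N ≥ M, (N : ℝ) * a N ^ 2 < ε := by
  by_contra h
  push_neg at h
  have h' : ∀ n : ℕ, ε / ((n : ℝ) + (M + 1)) ≤ a (n + (M + 1)) ^ 2 := by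
    intro n
    have hpos : (0:ℝ) < (n : ℝ) + (M + 1) := by positivity
    have h2 := h (n + (M + 1)) (by omega)
    rw [div_le_iff₀ hpos]
    push_cast at h2 ⊢
    nlinarith
  have hs2 : Summable fun n : ℕ => a (n + (M + 1)) ^ 2 := by
    exact_mod_cast (summable_nat_add_iff (M + 1)).2 hsum
  have hsum' : Summable fun n : ℕ => ε / ((n : ℝ) + (M + 1)) :=
    Summable.of_nonneg_of_le (fun n => by positivity) h' hs2
  have hsum'' : Summable fun n : ℕ => ((n : ℝ) + (M + 1))⁻¹ := by
    have h3 := hsum'.mul_left ε⁻¹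
    refine h3.congr fun n => ?_
    field_simp
  have h4 : Summable fun n : ℕ => ((n : ℝ))⁻¹ := by
    rw [← summable_nat_add_iff (M + 1)]
    refine hsum''.congr fun n => ?_
    push_cast
    ring_nf
  exact Real.not_summable_natCast_inv h4

lemma key (a : ℕ → ℝ) (hsum : Summable fun n => a n ^ 2)
    (hT : Summable fun n : ℕ => ((n : ℝ) + 1) ^ 2 * (a (n + 1) - a n) ^ 2) :
    (∑' n, a n ^ 2) ≤ 8 * ∑' n : ℕ, ((n : ℝ) + 1) ^ 2 * (a (n + 1) - a n) ^ 2 := by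
  set S := ∑' n, a n ^ 2 with hSdef
  set T := ∑' n : ℕ, ((n : ℝ) + 1) ^ 2 * (a (n + 1) - a n) ^ 2 with hTdef
  have hS0 : 0 ≤ S := tsum_nonneg fun n => sq_nonneg _
  have hT0 : 0 ≤ T := tsum_nonneg fun n => by positivity
  have hshift : Summable fun n => a (n + 1) ^ 2 := (summable_nat_add_iff 1).2 hsum
  have hshiftle : (∑' n, a (n + 1) ^ 2) ≤ S := by
    rw [hSdef, Summable.tsum_eq_zero_add hsum]
    nlinarith [sq_nonneg (a 0), le_refl (∑' n, a (n + 1) ^ 2)]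
  have hsqrt4 : Real.sqrt 4 = 2 := by
    rw [show (4:ℝ) = 2 ^ 2 by norm_num, Real.sqrt_sq (by norm_num)]
  -- partial sums bound
  have main : ∀ N : ℕ, ∑ n ∈ range N, a n ^ 2 ≤
      (N : ℝ) * a N ^ 2 + 2 * Real.sqrt T * Real.sqrt S := by
    intro N
    have tel : ∑ n ∈ range N, (((n : ℝ) + 1) * a (n + 1) ^ 2 - (n : ℝ) * a n ^ 2)
        = (N : ℝ) * a N ^ 2 := by
      have h := Finset.sum_range_sub (fun n => (n : ℝ) * a n ^ 2) N
      push_cast at h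
      simpa using h
    have expand : ∑ n ∈ range N, a n ^ 2
        + ∑ n ∈ range N, (((n : ℝ) + 1) * (a (n + 1) - a n)) * (a (n + 1) + a n)
        = (N : ℝ) * a N ^ 2 := by
      rw [← tel, ← Finset.sum_add_distrib]
      exact Finset.sum_congr rfl fun n _ => by ring
    -- Cauchy-Schwarz
    have cs := Finset.sum_mul_sq_le_sq_mul_sq (range N)
      (fun n => ((n : ℝ) + 1) * (a (n + 1) - a n)) (fun n => a (n + 1) + a n)
    have hb1 : ∑ n ∈ range N, (((n : ℝ) + 1) * (a (n + 1) - a n)) ^ 2 ≤ T := by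
      calc ∑ n ∈ range N, (((n : ℝ) + 1) * (a (n + 1) - a n)) ^ 2
          = ∑ n ∈ range N, ((n : ℝ) + 1) ^ 2 * (a (n + 1) - a n) ^ 2 := by
            exact Finset.sum_congr rfl fun n _ => mul_pow _ _ 2
        _ ≤ T := Summable.sum_le_tsum _ (fun n _ => by positivity) hT
    have hb2 : ∑ n ∈ range N, (a (n + 1) + a n) ^ 2 ≤ 4 * S := by
      have h1 : ∑ n ∈ range N, (a (n + 1) + a n) ^ 2
          ≤ ∑ n ∈ range N, (2 * a (n + 1) ^ 2 + 2 * a n ^ 2) :=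
        Finset.sum_le_sum fun n _ => by nlinarith [sq_nonneg (a (n+1) - a n)]
      have h2 : ∑ n ∈ range N, a (n + 1) ^ 2 ≤ S :=
        le_trans (Summable.sum_le_tsum _ (fun n _ => sq_nonneg _) hshift) hshiftle
      have h3 : ∑ n ∈ range N, a n ^ 2 ≤ S := Summable.sum_le_tsum _ (fun n _ => sq_nonneg _) hsum
      rw [Finset.sum_add_distrib, ← Finset.mul_sum, ← Finset.mul_sum] at h1
      linarith
    have cs2 : (∑ n ∈ range N, (((n : ℝ) + 1) * (a (n + 1) - a n)) * (a (n + 1) + a n)) ^ 2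
        ≤ T * (4 * S) := by
      refine cs.trans ?_
      have h0' : (0:ℝ) ≤ ∑ n ∈ range N, (a (n + 1) + a n) ^ 2 :=
        Finset.sum_nonneg fun n _ => sq_nonneg _
      exact mul_le_mul hb1 hb2 h0' hT0
    have habs : |∑ n ∈ range N, (((n : ℝ) + 1) * (a (n + 1) - a n)) * (a (n + 1) + a n)|
        ≤ 2 * Real.sqrt T * Real.sqrt S := by
      rw [← Real.sqrt_sq_eq_abs]
      calc Real.sqrt ((∑ n ∈ range N, (((n : ℝ) + 1) * (a (n + 1) - a n)) * (a (n + 1) + a n)) ^ 2)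
          ≤ Real.sqrt (T * (4 * S)) := Real.sqrt_le_sqrt cs2
        _ = 2 * Real.sqrt T * Real.sqrt S := by
            rw [Real.sqrt_mul hT0, Real.sqrt_mul (by norm_num : (0:ℝ) ≤ 4), hsqrt4]
            ring
    have hneg := neg_abs_le
      (∑ n ∈ range N, (((n : ℝ) + 1) * (a (n + 1) - a n)) * (a (n + 1) + a n))
    linarith
  -- S ≤ 2√T√S + 2ε for all ε
  have step : ∀ ε : ℝ, 0 < ε → S ≤ 2 * Real.sqrt T * Real.sqrt S + 2 * ε := by
    intro ε hε
    have htend := hsum.hasSum.tendsto_sum_nat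
    rw [Metric.tendsto_atTop] at htend
    obtain ⟨N₀, hN₀⟩ := htend ε hε
    obtain ⟨N, hNge, hNsmall⟩ := aux_sub a hsum hε N₀
    have hP : S - ε ≤ ∑ n ∈ range N₀, a n ^ 2 := by
      have h5 := hN₀ N₀ le_rfl
      rw [Real.dist_eq, abs_sub_lt_iff] at h5
      linarith [h5.2]
    have hmono : ∑ n ∈ range N₀, a n ^ 2 ≤ ∑ n ∈ range N, a n ^ 2 :=
      Finset.sum_le_sum_of_subset_of_nonneg (Finset.range_subset_range.2 hNge)
        (fun n _ _ => sq_nonneg _)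
    have h6 := main N
    linarith
  have hfinal : S ≤ 2 * Real.sqrt T * Real.sqrt S := by
    by_contra h
    push_neg at h
    obtain ⟨ε, hε, hlt⟩ : ∃ ε > 0, 2 * Real.sqrt T * Real.sqrt S + 2 * ε < S :=
      ⟨(S - 2 * Real.sqrt T * Real.sqrt S) / 4, by linarith, by linarith⟩
    linarith [step ε hε]
  have hs4 : S ≤ 4 * T := by
    nlinarith [Real.sq_sqrt hS0, Real.sq_sqrt hT0, Real.sqrt_nonneg S, Real.sqrt_nonneg T,
      sq_nonneg (Real.sqrt S - 2 * Real.sqrt T)]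
  linarith

theorem stmt1 (a : ℕ → ℝ) (hsum : Summable fun n => a n ^ 2) :
    ENNReal.ofReal (∑' n, a n ^ 2) ≤
      8 * ∑' n : ℕ, ENNReal.ofReal (((n : ℝ) + 1) ^ 2 * (a (n + 1) - a n) ^ 2) := by
  set R := ∑' n : ℕ, ENNReal.ofReal (((n : ℝ) + 1) ^ 2 * (a (n + 1) - a n) ^ 2) with hR
  by_cases hRtop : R = ⊤
  · rw [hRtop, ENNReal.mul_top (by norm_num)]
    exact le_top
  · have hT : Summable fun n : ℕ => ((n : ℝ) + 1) ^ 2 * (a (n + 1) - a n) ^ 2 := by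
      have h1 := ENNReal.summable_toReal hRtop
      refine h1.congr fun n => ?_
      rw [ENNReal.toReal_ofReal (by positivity)]
    have hRe : R = ENNReal.ofReal (∑' n : ℕ, ((n : ℝ) + 1) ^ 2 * (a (n + 1) - a n) ^ 2) :=
      (ENNReal.ofReal_tsum_of_nonneg (fun n => by positivity) hT).symm
    rw [hRe, ← ENNReal.ofReal_ofNat, ← ENNReal.ofReal_mul (by norm_num)]
    exact ENNReal.ofReal_le_ofReal (key a hsum hT)
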